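/- Let G be a graph on n vertices placed in convex position in the plane, and let k be a natural number. If G has more than k·n edges, then the convex-geometric (straight-line) drawing of G contains a plane (pairwise noncrossing) path with at least 2k+1 edges. -/

import Mathlib

/-- `x` lies strictly inside the open cyclic interval from `a` (clockwise) to `b`,
for points labelled by `ZMod n` in cyclic order. -/
def inArc (n : ℕ) (a b x : ZMod n) : Prop :=
  0 < (x - a).val ∧ (x - a).val < (b - a).val

/-- Two chords on points in convex position (labelled cyclically by `ZMod n`) cross:
all four endpoints are distinct and the endpoints interleave in the cyclic order,
i.e. exactly one endpoint of `f` lies in the open cyclic interval spanned by `e`. -/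
def Crossing (n : ℕ) (e f : ZMod n × ZMod n) : Prop :=
  e.1 ≠ e.2 ∧ f.1 ≠ f.2 ∧ e.1 ≠ f.1 ∧ e.1 ≠ f.2 ∧ e.2 ≠ f.1 ∧ e.2 ≠ f.2 ∧
    (inArc n e.1 e.2 f.1 ↔ ¬ inArc n e.1 e.2 f.2)

set_option linter.unusedSectionVars false

namespace Stmt5Aux



section
variable {n : ℕ} [NeZero n]

lemma val_sub_ite (u w : ZMod n) :
    (u - w).val = if w.val ≤ u.val then u.val - w.val else u.val + n - w.val := by
  split_ifs with h
  · exact ZMod.val_sub h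
  · have hw : w ≠ 0 := by
      intro h0; rw [h0] at h; simp at h
    have h1 : u - w = u + -w := by ring
    rw [h1, ZMod.val_add, ZMod.neg_val, if_neg hw]
    have hu := ZMod.val_lt u
    have hwlt := ZMod.val_lt w
    have h2 : u.val + (n - w.val) < n := by omega
    rw [Nat.mod_eq_of_lt h2]; omega

lemma val_sub_pos_iff {u w : ZMod n} : 0 < (u - w).val ↔ u ≠ w := by
  rw [Nat.pos_iff_ne_zero, Ne, ZMod.val_eq_zero, sub_eq_zero]

lemma val_sub_inj {x u w : ZMod n} (h : (u - x).val = (w - x).val) : u = w := by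
  have := ZMod.val_injective n h
  exact sub_left_inj.mp this

lemma inArc_iff_base (x : ZMod n) {c d : ZMod n} (f : ZMod n) (hcd : c ≠ d) :
    inArc n c d f ↔ (if (c - x).val < (d - x).val
      then ((c - x).val < (f - x).val ∧ (f - x).val < (d - x).val)
      else ((c - x).val < (f - x).val ∨ (f - x).val < (d - x).val)) := by
  have e1 : f - c = (f - x) - (c - x) := by ring
  have e2 : d - c = (d - x) - (c - x) := by ring
  have hC := ZMod.val_lt (c - x)
  have hD := ZMod.val_lt (d - x)
  have hF := ZMod.val_lt (f - x)
  have hCD : (c - x).val ≠ (d - x).val := fun h => hcd (val_sub_inj h)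
  have hfc := val_sub_ite (f - x) (c - x)
  have hdc := val_sub_ite (d - x) (c - x)
  unfold inArc
  rw [e1, e2, hfc, hdc]
  split_ifs <;> omega
end

section
variable {n : ℕ} [NeZero n]

lemma inArc_ne₁ {x y z : ZMod n} (h : inArc n x y z) : z ≠ x := by
  unfold inArc at h
  intro he; rw [he, sub_self, ZMod.val_zero] at h; omega

lemma inArc_ne₂ {x y z : ZMod n} (h : inArc n x y z) : z ≠ y := by
  intro he; rw [he] at h; exact absurd h.2 (lt_irrefl _)

lemma inArc_ne₃ {x y z : ZMod n} (h : inArc n x y z) : x ≠ y := by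
  unfold inArc at h
  intro he; rw [he, sub_self, ZMod.val_zero] at h; omega

lemma not_inArc_left (x z : ZMod n) : ¬ inArc n x z x := by
  intro h; unfold inArc at h; rw [sub_self, ZMod.val_zero] at h; omega

lemma not_inArc_right (x z : ZMod n) : ¬ inArc n x z z := fun h => absurd h.2 (lt_irrefl _)

lemma val_sub_ne_zero {a b : ZMod n} (h : a ≠ b) : 0 < (a - b).val := by
  rcases Nat.eq_zero_or_pos (a - b).val with h0 | h0
  · exact absurd (sub_eq_zero.mp ((ZMod.val_eq_zero _).mp h0)) h
  · exact h0

lemma arc_disjoint {a b v : ZMod n} (h1 : inArc n a b v) (h2 : inArc n b a v) : False := by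
  have e1 : v - b = (v - a) - (b - a) := by ring
  have e2 : a - b = (0 : ZMod n) - (b - a) := by ring
  have hv := val_sub_ite (v - a) (b - a)
  have ha := val_sub_ite (0 : ZMod n) (b - a)
  unfold inArc at h2
  rw [e1, e2] at h2
  rw [hv] at h2
  rw [ha] at h2
  rw [ZMod.val_zero] at h2
  have hB := ZMod.val_lt (b - a)
  have hV := ZMod.val_lt (v - a)
  unfold inArc at h1
  split_ifs at h2 <;> omega

lemma inArc_rev {y x v : ZMod n} :
    inArc n y x v ↔ (0 < (x - v).val ∧ (x - v).val < (x - y).val) := by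
  have e1 : x - v = (x - y) - (v - y) := by ring
  have h := val_sub_ite (x - y) (v - y)
  rw [e1, h]
  have hX := ZMod.val_lt (x - y)
  have hV := ZMod.val_lt (v - y)
  unfold inArc
  split_ifs <;> omega

lemma arc_sub1 {x y z w : ZMod n} (h1 : inArc n x y z) (h2 : inArc n x z w) :
    inArc n x y w := by
  unfold inArc at *; omega

lemma arc_sub2 {y x z w : ZMod n} (h1 : inArc n y x z) (h2 : inArc n z x w) :
    inArc n y x w := by
  rw [inArc_rev] at h1 h2 ⊢; omega

lemma lemA {x z c d f f' : ZMod n} (hc : inArc n x z c) (hd : inArc n x z d) (hcd : c ≠ d)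
    (hf : ¬ inArc n x z f) (hf' : ¬ inArc n x z f') :
    (inArc n c d f ↔ inArc n c d f') := by
  have key : ∀ g : ZMod n, ¬ inArc n x z g → (inArc n c d g ↔ (d - x).val < (c - x).val) := by
    intro g hg
    rw [inArc_iff_base x g hcd]
    unfold inArc at hc hd hg
    have hCD : (c - x).val ≠ (d - x).val := fun h => hcd (val_sub_inj h)
    have hG := ZMod.val_lt (g - x)
    have hZ := ZMod.val_lt (z - x)
    split_ifs <;> omega
  rw [key f hf, key f' hf']

lemma lemB {a b c d f f' : ZMod n} (hab : a ≠ b)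
    (hc : c = a ∨ inArc n a b c) (hd : d = a ∨ inArc n a b d) (hcd : c ≠ d)
    (hf : f = b ∨ inArc n b a f) (hf' : f' = b ∨ inArc n b a f') :
    (inArc n c d f ↔ inArc n c d f') := by
  have hB : 0 < (b - a).val := val_sub_ne_zero (fun h => hab h.symm)
  have hBlt := ZMod.val_lt (b - a)
  have convC : ∀ u : ZMod n, (u = a ∨ inArc n a b u) →
      ((u - a).val = 0 ∨ (0 < (u - a).val ∧ (u - a).val < (b - a).val)) := by
    rintro u (rfl | hu)
    · left; rw [sub_self, ZMod.val_zero]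
    · right; exact hu
  have convF : ∀ g : ZMod n, (g = b ∨ inArc n b a g) →
      ((b - a).val ≤ (g - a).val) := by
    rintro g (rfl | hg)
    · exact le_refl _
    · have e1 : g - b = (g - a) - (b - a) := by ring
      have e2 : a - b = (0 : ZMod n) - (b - a) := by ring
      have h1 := val_sub_ite (g - a) (b - a)
      have h2 := val_sub_ite (0 : ZMod n) (b - a)
      unfold inArc at hg
      rw [e1, e2, h1, h2, ZMod.val_zero] at hg
      have hG := ZMod.val_lt (g - a)
      split_ifs at hg <;> omega
  have key : ∀ g : ZMod n, (g = b ∨ inArc n b a g) →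
      (inArc n c d g ↔ (d - a).val < (c - a).val) := by
    intro g hg
    rw [inArc_iff_base a g hcd]
    have h1 := convC c hc
    have h2 := convC d hd
    have h3 := convF g hg
    have hCD : (c - a).val ≠ (d - a).val := fun h => hcd (val_sub_inj h)
    have hG := ZMod.val_lt (g - a)
    split_ifs <;> omega
  rw [key f hf, key f' hf']

end

section
variable {n : ℕ} [NeZero n]

def Win (n : ℕ) (d : Bool) (x y z : ZMod n) : Prop :=
  if d then inArc n x y z else inArc n y x z

inductive Sp (G : SimpleGraph (ZMod n)) : Bool → ZMod n → ZMod n → ℕ → Prop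
  | nil (d : Bool) (x y : ZMod n) : Sp G d x y 0
  | cons {d : Bool} {x y : ZMod n} {t : ℕ} (z : ZMod n) (ha : G.Adj x z)
      (hw : Win n d x y z) (hs : Sp G (!d) z x t) : Sp G d x y (t + 1)

lemma win_ne₁ {d : Bool} {x y z : ZMod n} (h : Win n d x y z) : z ≠ x := by
  cases d
  · exact inArc_ne₂ h
  · exact inArc_ne₁ h

lemma win_not_self₂ (d : Bool) (z x : ZMod n) : ¬ Win n d z x x := by
  cases d
  · simpa [Win] using not_inArc_left x z
  · simpa [Win] using not_inArc_right z x

lemma win_sub {d : Bool} {x y z v : ZMod n} (hz : Win n d x y z) (hv : Win n (!d) z x v) :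
    Win n d x y v := by
  cases d
  · exact arc_sub2 hz hv
  · exact arc_sub1 hz hv

def distB (χ : Bool) (x u : ZMod n) : ℕ := if χ then (u - x).val else (x - u).val

lemma distB_pos {χ : Bool} {x u : ZMod n} (h : u ≠ x) : 0 < distB χ x u := by
  cases χ
  · simpa [distB] using val_sub_ne_zero (Ne.symm h)
  · simpa [distB] using val_sub_ne_zero h

lemma distB_inj {χ : Bool} {x u u' : ZMod n} (h : distB χ x u = distB χ x u') :
    u = u' := by
  cases χ
  · simp only [distB, Bool.false_eq_true, if_false] at h
    exact sub_right_inj.mp (ZMod.val_injective n h)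
  · simp only [distB, if_true] at h
    exact val_sub_inj h

lemma win_iff_dist {d : Bool} {x y z : ZMod n} :
    Win n d x y z ↔ (0 < distB d x z ∧ distB d x z < distB d x y) := by
  cases d
  · simp only [Win, distB, if_neg, Bool.false_eq_true]
    exact inArc_rev
  · simp only [Win, distB, if_pos]
    exact Iff.rfl

def dirAt (d : Bool) (s : ℕ) : Bool := if Even s then d else !d

lemma dirAt_zero (d : Bool) : dirAt d 0 = d := by simp [dirAt]

lemma dirAt_succ (d : Bool) (s : ℕ) : dirAt d (s + 1) = dirAt (!d) s := by
  by_cases h : Even s <;> simp [dirAt, Nat.even_add_one, h]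

open Classical in
noncomputable def closest (G : SimpleGraph (ZMod n)) (χ : Bool) (x : ZMod n) : ZMod n :=
  if h : ∃ w, G.Adj x w ∧ ∀ u, G.Adj x u → distB χ x w ≤ distB χ x u then h.choose else x

def Rset (G : SimpleGraph (ZMod n)) (χ : Bool) : Set (Sym2 (ZMod n)) :=
  Set.range (fun v => s(v, closest G χ v))

lemma closest_eq {G : SimpleGraph (ZMod n)} {χ : Bool} {x y : ZMod n}
    (hy : G.Adj x y) (hmin : ∀ u, G.Adj x u → distB χ x y ≤ distB χ x u) :
    closest G χ x = y := by
  have h : ∃ w, G.Adj x w ∧ ∀ u, G.Adj x u → distB χ x w ≤ distB χ x u := ⟨y, hy, hmin⟩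
  classical
  rw [closest]
  rw [dif_pos h]
  have hw := h.choose_spec
  exact distB_inj (le_antisymm (hw.2 y hy) (hmin _ hw.1))

lemma sp_mono {G G' : SimpleGraph (ZMod n)} (h : G' ≤ G) {d : Bool} {x y : ZMod n} {t : ℕ}
    (hsp : Sp G' d x y t) : Sp G d x y t := by
  induction hsp with
  | nil d x y => exact Sp.nil d x y
  | cons z ha hw _ ih => exact Sp.cons z (h ha) hw ih

lemma key (G : SimpleGraph (ZMod n)) (χ : Bool) :
    ∀ (s : ℕ) (d : Bool) (x y : ZMod n),
      (G.deleteEdges (Rset G χ)).Adj x y →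
      Sp (G.deleteEdges (Rset G χ)) d x y s → dirAt d s = χ → Sp G d x y (s + 1) := by
  intro s
  induction s with
  | zero =>
    intro d x y hxy _ hdir
    rw [dirAt_zero] at hdir; subst hdir
    rw [SimpleGraph.deleteEdges_adj] at hxy
    obtain ⟨hadj, hR⟩ := hxy
    by_cases hz : ∃ z, G.Adj x z ∧ Win n d x y z
    · obtain ⟨z, h1, h2⟩ := hz
      exact Sp.cons z h1 h2 (Sp.nil _ _ _)
    · exfalso
      push_neg at hz
      apply hR
      have hmin : ∀ u, G.Adj x u → distB d x y ≤ distB d x u := by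
        intro u hu
        have hne := hz u hu
        rw [win_iff_dist] at hne
        have hpos : 0 < distB d x u := distB_pos (G.ne_of_adj hu).symm
        omega
      rw [← closest_eq hadj hmin]
      exact ⟨x, rfl⟩
  | succ s ih =>
    intro d x y _ hsp hdir
    cases hsp with
    | cons z ha hw hs =>
      have hzx := ha.symm
      have hdir' : dirAt (!d) s = χ := by rw [← dirAt_succ]; exact hdir
      have hrec := ih (!d) z x hzx hs hdir'
      have haG : G.Adj x z := (SimpleGraph.deleteEdges_adj.mp ha).1
      exact Sp.cons z haG hw hrec

lemma Rset_ncard_le (G : SimpleGraph (ZMod n)) (χ : Bool) :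
    (Rset G χ).ncard ≤ n := by
  rw [Rset, ← Set.image_univ]
  calc ((fun v => s(v, closest G χ v)) '' Set.univ).ncard ≤ (Set.univ : Set (ZMod n)).ncard :=
        Set.ncard_image_le Set.finite_univ
    _ = n := by rw [Set.ncard_univ, Nat.card_eq_fintype_card, ZMod.card]

lemma count :
    ∀ (t : ℕ) (G : SimpleGraph (ZMod n)),
      (∀ a b, G.Adj a b → ¬ (Sp G true a b t ∧ Sp G true b a t)) →
      G.edgeSet.ncard ≤ t * n := by
  intro t
  induction t with
  | zero =>
    intro G h
    have hbot : G = ⊥ := by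
      ext a b
      simp only [SimpleGraph.bot_adj, iff_false]
      intro hab
      exact h a b hab ⟨Sp.nil _ _ _, Sp.nil _ _ _⟩
    rw [hbot]
    simp
  | succ t ih =>
    intro G h
    have hyp' : ∀ a b, (G.deleteEdges (Rset G (dirAt true t))).Adj a b →
        ¬ (Sp (G.deleteEdges (Rset G (dirAt true t))) true a b t ∧
           Sp (G.deleteEdges (Rset G (dirAt true t))) true b a t) := by
      rintro a b hab ⟨h1, h2⟩
      have k1 := key G (dirAt true t) t true a b hab h1 rfl
      have k2 := key G (dirAt true t) t true b a hab.symm h2 rfl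
      exact h a b (SimpleGraph.deleteEdges_adj.mp hab).1 ⟨k1, k2⟩
    have hcount := ih _ hyp'
    have hsplit : G.edgeSet =
        (G.edgeSet ∩ Rset G (dirAt true t)) ∪ (G.deleteEdges (Rset G (dirAt true t))).edgeSet := by
      rw [SimpleGraph.edgeSet_deleteEdges, Set.inter_union_diff]
    calc G.edgeSet.ncard
        ≤ (G.edgeSet ∩ Rset G (dirAt true t)).ncard +
          (G.deleteEdges (Rset G (dirAt true t))).edgeSet.ncard := by
          conv_lhs => rw [hsplit]
          exact Set.ncard_union_le _ _
      _ ≤ n + t * n := by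
          refine add_le_add ?_ hcount
          exact le_trans (Set.ncard_le_ncard Set.inter_subset_right (Set.toFinite _))
            (Rset_ncard_le G _)
      _ = (t + 1) * n := by ring

end


section
variable {n : ℕ} [NeZero n]

lemma nc_share {e f : ZMod n × ZMod n}
    (h : e.1 = f.1 ∨ e.1 = f.2 ∨ e.2 = f.1 ∨ e.2 = f.2) : ¬ Crossing n e f := by
  intro hc
  obtain ⟨h1, h2, h3, h4, h5, h6, h7⟩ := hc
  tauto

lemma nc_same_side {e f : ZMod n × ZMod n}
    (h : inArc n e.1 e.2 f.1 ↔ inArc n e.1 e.2 f.2) : ¬ Crossing n e f := by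
  intro hc
  obtain ⟨h1, h2, h3, h4, h5, h6, h7⟩ := hc
  tauto

end

lemma mem_zip_tail {α : Type*} : ∀ {L : List α} {p : α × α}, p ∈ L.zip L.tail →
    p.1 ∈ L ∧ p.2 ∈ L := by
  intro L
  induction L with
  | nil => intro p hp; simp at hp
  | cons a L' ih =>
    intro p hp
    cases L' with
    | nil => simp at hp
    | cons b L'' =>
      simp only [List.tail_cons, List.zip_cons_cons, List.mem_cons] at hp
      rcases hp with rfl | hp
      · constructor <;> simp
      · have := ih (by simpa using hp)
        exact ⟨List.mem_cons_of_mem _ this.1, List.mem_cons_of_mem _ this.2⟩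

lemma chain'_zip {α : Type*} {R : α → α → Prop} : ∀ {L : List α}, List.Chain' R L →
    ∀ p ∈ L.zip L.tail, R p.1 p.2 := by
  intro L
  induction L with
  | nil => intro _ p hp; simp at hp
  | cons a L' ih =>
    intro hc p hp
    cases L' with
    | nil => simp at hp
    | cons b L'' =>
      simp only [List.tail_cons, List.zip_cons_cons, List.mem_cons] at hp
      rcases hp with rfl | hp
      · exact (List.isChain_cons_cons.mp hc).1
      · exact ih (List.isChain_cons_cons.mp hc).2 p (by simpa using hp)

lemma zip_tail_append {α : Type*} :
    ∀ (A B : List α) (hA : A ≠ []) (hB : B ≠ []),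
      (A ++ B).zip (A ++ B).tail =
        (A.zip A.tail) ++ (A.getLast hA, B.head hB) :: (B.zip B.tail) := by
  intro A
  induction A with
  | nil => intro B hA hB; exact absurd rfl hA
  | cons a A' ih =>
    intro B hA hB
    cases A' with
    | nil =>
      cases B with
      | nil => exact absurd rfl hB
      | cons b B' => simp
    | cons a₂ A'' =>
      have ihh := ih B (by simp) hB
      simp only [List.cons_append, List.tail_cons, List.zip_cons_cons] at *
      rw [ihh]
      simp [List.getLast_cons]

section
variable {n : ℕ} [NeZero n]

lemma ext_cons {G : SimpleGraph (ZMod n)} {d : Bool} {x y : ZMod n} {t : ℕ}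
    (hsp : Sp G d x y t) :
    ∃ M : List (ZMod n), M ≠ [] ∧ M.head? = some x ∧ M.length = t + 1 ∧
      List.Chain' G.Adj M ∧ M.Nodup ∧
      (∀ v ∈ M, v = x ∨ Win n d x y v) ∧
      List.Pairwise (fun e f => ¬ Crossing n e f) (M.zip M.tail) := by
  induction hsp with
  | nil d x y =>
    refine ⟨[x], by simp, by simp, by simp, List.isChain_singleton _, by simp, ?_, by simp⟩
    intro v hv; left; simpa using hv
  | @cons d x y t z ha hw hs ih =>
    obtain ⟨M', hne, hhead, hlen, hchain, hnodup, hmem, hpw⟩ := ih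
    obtain ⟨M'', rfl⟩ : ∃ M'', M' = z :: M'' := by
      cases M' with
      | nil => simp at hhead
      | cons w M'' => simp at hhead; exact ⟨M'', by rw [hhead]⟩
    refine ⟨x :: z :: M'', by simp, by simp, by simpa using hlen, ?_, ?_, ?_, ?_⟩
    · exact List.isChain_cons_cons.mpr ⟨ha, hchain⟩
    · refine List.nodup_cons.mpr ⟨?_, hnodup⟩
      intro hx
      rcases hmem x hx with h1 | h1
      · exact (win_ne₁ hw) h1.symm
      · exact win_not_self₂ (!d) z x h1
    · intro v hv
      rcases List.mem_cons.mp hv with rfl | hv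
      · exact Or.inl rfl
      · rcases hmem v hv with rfl | h1
        · exact Or.inr hw
        · exact Or.inr (win_sub hw h1)
    · simp only [List.tail_cons, List.zip_cons_cons]
      refine List.pairwise_cons.mpr ⟨?_, hpw⟩
      rintro ⟨c, e⟩ hq
      have hce := mem_zip_tail hq
      have hc := hmem c hce.1
      have he := hmem e hce.2
      by_cases hcz : c = z
      · exact nc_share (by right; right; left; exact hcz.symm)
      by_cases hez : e = z
      · exact nc_share (by right; right; right; exact hez.symm)
      have hc' : Win n (!d) z x c := hc.resolve_left hcz
      have he' : Win n (!d) z x e := he.resolve_left hez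
      cases d with
      | true =>
        have h1 : inArc n x z c := by simpa [Win] using hc'
        have h2 : inArc n x z e := by simpa [Win] using he'
        exact nc_same_side (iff_of_true h1 h2)
      | false =>
        have h1 : inArc n z x c := by simpa [Win] using hc'
        have h2 : inArc n z x e := by simpa [Win] using he'
        refine nc_same_side (iff_of_false ?_ ?_)
        · exact fun hcon => arc_disjoint hcon h1
        · exact fun hcon => arc_disjoint hcon h2

lemma ext_last {G : SimpleGraph (ZMod n)} {d : Bool} {x y : ZMod n} {t : ℕ}
    (hsp : Sp G d x y t) :
    ∃ M : List (ZMod n), M ≠ [] ∧ M.getLast? = some x ∧ M.length = t + 1 ∧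
      List.Chain' G.Adj M ∧ M.Nodup ∧
      (∀ v ∈ M, v = x ∨ Win n d x y v) ∧
      List.Pairwise (fun e f => ¬ Crossing n e f) (M.zip M.tail) := by
  induction hsp with
  | nil d x y =>
    refine ⟨[x], by simp, by simp, by simp, List.isChain_singleton _, by simp, ?_, by simp⟩
    intro v hv; left; simpa using hv
  | @cons d x y t z ha hw hs ih =>
    obtain ⟨M', hne, hlast, hlen, hchain, hnodup, hmem, hpw⟩ := ih
    have hxM : x ∉ M' := by
      intro hx
      rcases hmem x hx with h1 | h1
      · exact (win_ne₁ hw) h1.symm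
      · exact win_not_self₂ (!d) z x h1
    have hlastv : M'.getLast hne = z := by
      have := List.getLast?_eq_getLast hne
      rw [this] at hlast
      exact (Option.some_injective _ hlast).symm ▸ rfl
    refine ⟨M' ++ [x], by simp, by simp, by simp [hlen], ?_, ?_, ?_, ?_⟩
    · refine List.isChain_append.mpr ?_
      refine ⟨hchain, by simp, ?_⟩
      intro u hu v hv
      simp only [List.head?_cons, Option.mem_def, Option.some.injEq] at hv
      rw [List.getLast?_eq_getLast hne, Option.mem_def, Option.some.injEq] at hu
      rw [← hu, hlastv, ← hv]
      exact ha.symm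
    · rw [List.nodup_append]
      exact ⟨hnodup, by simp, by intro u hu b hb hub; simp at hb; rw [hub, hb] at hu; exact hxM hu⟩
    · intro v hv
      rcases List.mem_append.mp hv with hv | hv
      · rcases hmem v hv with rfl | h1
        · exact Or.inr hw
        · exact Or.inr (win_sub hw h1)
      · left; simpa using hv
    · rw [zip_tail_append M' [x] hne (by simp)]
      rw [List.pairwise_append]
      refine ⟨hpw, by simp, ?_⟩
      rintro ⟨c, e⟩ hq q' hq'
      have hq'' : q' = (z, x) := by
        simp only [List.head_cons, List.mem_cons, List.mem_singleton] at hq'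
        rcases hq' with h | h
        · rw [h, hlastv]
        · simp at h
      subst hq''
      have hce := mem_zip_tail hq
      have hc := hmem c hce.1
      have he := hmem e hce.2
      have hcne : c ≠ e := G.ne_of_adj (chain'_zip hchain _ hq)
      by_cases hcz : c = z
      · exact nc_share (by left; exact hcz)
      by_cases hez : e = z
      · exact nc_share (by right; right; left; exact hez)
      have hc' : Win n (!d) z x c := hc.resolve_left hcz
      have he' : Win n (!d) z x e := he.resolve_left hez
      cases d with
      | true =>
        have h1 : inArc n x z c := by simpa [Win] using hc'
        have h2 : inArc n x z e := by simpa [Win] using he'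
        exact nc_same_side (lemA h1 h2 hcne (not_inArc_right x z) (not_inArc_left x z))
      | false =>
        have h1 : inArc n z x c := by simpa [Win] using hc'
        have h2 : inArc n z x e := by simpa [Win] using he'
        exact nc_same_side (lemA h1 h2 hcne (not_inArc_left z x) (not_inArc_right z x))

lemma build {G : SimpleGraph (ZMod n)} {a b : ZMod n} {k : ℕ} (hab : G.Adj a b)
    (h1 : Sp G true a b k) (h2 : Sp G true b a k) :
    ∃ L : List (ZMod n), L.length = 2 * k + 2 ∧ List.Chain' G.Adj L ∧ L.Nodup ∧
      List.Pairwise (fun e f => ¬ Crossing n e f) (L.zip L.tail) := by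
  obtain ⟨M₁, hne₁, hlast₁, hlen₁, hchain₁, hnodup₁, hmem₁, hpw₁⟩ := ext_last h1
  obtain ⟨M₂, hne₂, hhead₂, hlen₂, hchain₂, hnodup₂, hmem₂, hpw₂⟩ := ext_cons h2
  have hmem₁' : ∀ v ∈ M₁, v = a ∨ inArc n a b v := by
    intro v hv
    rcases hmem₁ v hv with h | h
    · exact Or.inl h
    · exact Or.inr (by simpa [Win] using h)
  have hmem₂' : ∀ v ∈ M₂, v = b ∨ inArc n b a v := by
    intro v hv
    rcases hmem₂ v hv with h | h
    · exact Or.inl h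
    · exact Or.inr (by simpa [Win] using h)
  have hdisj : ∀ v ∈ M₁, v ∈ M₂ → False := by
    intro v hv1 hv2
    rcases hmem₁' v hv1 with rfl | hA
    · rcases hmem₂' v hv2 with h | h
      · exact G.ne_of_adj hab h
      · exact not_inArc_right b v h
    · rcases hmem₂' v hv2 with rfl | hB
      · exact not_inArc_right a v hA
      · exact arc_disjoint hA hB
  have hab' : a ≠ b := G.ne_of_adj hab
  have hlastv₁ : M₁.getLast hne₁ = a := by
    have := List.getLast?_eq_getLast hne₁
    rw [this] at hlast₁
    exact (Option.some_injective _ hlast₁)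
  have hheadv₂ : M₂.head hne₂ = b := by
    have := List.head?_eq_head (l := M₂) hne₂
    rw [this] at hhead₂
    exact Option.some_injective _ hhead₂
  refine ⟨M₁ ++ M₂, ?_, ?_, ?_, ?_⟩
  · simp [hlen₁, hlen₂]; ring
  · refine List.isChain_append.mpr ?_
    refine ⟨hchain₁, hchain₂, ?_⟩
    intro u hu v hv
    rw [List.getLast?_eq_getLast hne₁, Option.mem_def, Option.some.injEq] at hu
    rw [List.head?_eq_head (l := M₂) hne₂, Option.mem_def, Option.some.injEq] at hv
    rw [← hu, hlastv₁, ← hv, hheadv₂]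
    exact hab
  · rw [List.nodup_append]
    exact ⟨hnodup₁, hnodup₂, fun a ha b hb hab => hdisj a ha (hab ▸ hb)⟩
  · rw [zip_tail_append M₁ M₂ hne₁ hne₂, hlastv₁, hheadv₂]
    rw [List.pairwise_append]
    refine ⟨hpw₁, ?_, ?_⟩
    · refine List.pairwise_cons.mpr ⟨?_, hpw₂⟩
      rintro ⟨c, e⟩ hq
      have hce := mem_zip_tail hq
      have hc := hmem₂' c hce.1
      have he := hmem₂' e hce.2
      by_cases hcb : c = b
      · exact nc_share (by right; right; left; exact hcb.symm)
      by_cases heb : e = b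
      · exact nc_share (by right; right; right; exact heb.symm)
      have hc' := hc.resolve_left hcb
      have he' := he.resolve_left heb
      refine nc_same_side (iff_of_false ?_ ?_)
      · exact fun hcon => arc_disjoint hcon hc'
      · exact fun hcon => arc_disjoint hcon he'
    · rintro ⟨c, e⟩ hq q' hq'
      have hce := mem_zip_tail hq
      have hc := hmem₁' c hce.1
      have he := hmem₁' e hce.2
      have hcne : c ≠ e := G.ne_of_adj (chain'_zip hchain₁ _ hq)
      rcases List.mem_cons.mp hq' with rfl | hq'
      · -- q' = (a, b)
        by_cases hca : c = a
        · exact nc_share (by left; exact hca)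
        by_cases hea : e = a
        · exact nc_share (by right; right; left; exact hea)
        have hc' := hc.resolve_left hca
        have he' := he.resolve_left hea
        exact nc_same_side (lemA hc' he' hcne (not_inArc_left a b) (not_inArc_right a b))
      · obtain ⟨hf1, hf2⟩ := mem_zip_tail hq'
        exact nc_same_side (lemB hab' hc he hcne (hmem₂' _ hf1) (hmem₂' _ hf2))

end

lemma walk_of_chain {V : Type*} (G : SimpleGraph V) :
    ∀ (L : List V), L ≠ [] → List.Chain' G.Adj L →
      ∃ (u v : V) (p : G.Walk u v), p.support = L := by
  intro L
  induction L with
  | nil => intro h; exact absurd rfl h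
  | cons x L' ih =>
    intro _ hc
    cases L' with
    | nil => exact ⟨x, x, SimpleGraph.Walk.nil, by simp⟩
    | cons y L'' =>
      obtain ⟨u, v, p, hp⟩ := ih (by simp) (List.isChain_cons_cons.mp hc).2
      have hu : u = y := by
        have := p.support_eq_cons
        rw [hp] at this
        exact (List.cons.injEq _ _ _ _).mp this |>.1.symm
      subst hu
      exact ⟨x, v, SimpleGraph.Walk.cons (List.isChain_cons_cons.mp hc).1 p, by simp [hp]⟩


end Stmt5Aux

open Stmt5Aux in
/-- Perles' lemma: if a graph on `n` vertices in convex position has more than `k·n`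
edges, then its convex-geometric drawing contains a plane path with at least `2k+1`
edges (no two edges of the path cross). -/
theorem stmt5 (n k : ℕ) (hn : 0 < n) (G : SimpleGraph (ZMod n))
    (hE : k * n < G.edgeSet.ncard) :
    ∃ (u v : ZMod n) (p : G.Walk u v), p.IsPath ∧ 2 * k + 1 ≤ p.length ∧
      (p.support.zip p.support.tail).Pairwise (fun e f => ¬ Crossing n e f) := by
  haveI : NeZero n := ⟨hn.ne'⟩
  have hex : ∃ a b, G.Adj a b ∧ Sp G true a b k ∧ Sp G true b a k := by
    by_contra hno
    push_neg at hno
    have hyp : ∀ a b, G.Adj a b → ¬ (Sp G true a b k ∧ Sp G true b a k) := by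
      rintro a b hab ⟨s1, s2⟩
      exact hno a b hab s1 s2
    exact absurd (count k G hyp) (not_le.mpr hE)
  obtain ⟨a, b, hab, h1, h2⟩ := hex
  obtain ⟨L, hlen, hchain, hnodup, hpw⟩ := build hab h1 h2
  have hne : L ≠ [] := by
    intro h; rw [h] at hlen; simp at hlen
  obtain ⟨u, v, p, hp⟩ := walk_of_chain G L hne hchain
  refine ⟨u, v, p, ?_, ?_, ?_⟩
  · rw [SimpleGraph.Walk.isPath_def, hp]; exact hnodup
  · have := SimpleGraph.Walk.length_support p
    rw [hp, hlen] at this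
    omega
  · rw [hp]; exact hpw
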